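/- Let f : ℝ^d → ℝ be convex and differentiable with L-Lipschitz gradient, where L > 0. Then the map w ↦ w − ∇f(w) is Lipschitz continuous with constant max{L − 1, 1}: for all w, w' ∈ ℝ^d, ‖(w − ∇f(w)) − (w' − ∇f(w'))‖₂ ≤ max{L − 1, 1}·‖w − w'‖₂. -/

import Mathlib

open InnerProductSpace Set

local notation "⟪" x ", " y "⟫" => @inner ℝ _ _ x y

section Aux

variable {E : Type*} [NormedAddCommGroup E] [InnerProductSpace ℝ E] [CompleteSpace E]

lemma line_hasDerivAt {f : E → ℝ} (hdiff : ∀ w, DifferentiableAt ℝ f w) (x v : E) (t : ℝ) :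
    HasDerivAt (fun s : ℝ => f (x + s • v)) ⟪gradient f (x + t • v), v⟫ t := by
  have h1 : HasDerivAt (fun s : ℝ => x + s • v) v t := by
    simpa using ((hasDerivAt_id t).smul_const v).const_add x
  have h2 := (hdiff (x + t • v)).hasGradientAt.hasFDerivAt
  have h3 := h2.comp_hasDerivAt t h1
  simpa [InnerProductSpace.toDual_apply_apply, Function.comp_def] using h3

/-- Descent lemma. -/
lemma descent_lemma {f : E → ℝ} {L : ℝ} (hL : 0 < L)
    (hdiff : ∀ w, DifferentiableAt ℝ f w)
    (hlip : ∀ w v : E, ‖gradient f w - gradient f v‖ ≤ L * ‖w - v‖) (x y : E) :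
    f y ≤ f x + ⟪gradient f x, y - x⟫ + L / 2 * ‖y - x‖ ^ 2 := by
  set v := y - x with hv
  set gx := gradient f x with hgx
  set F : ℝ → ℝ := fun t => f (x + t • v) - t * ⟪gx, v⟫ - L / 2 * t ^ 2 * ‖v‖ ^ 2 with hF
  have hF' : ∀ t : ℝ, HasDerivAt F
      (⟪gradient f (x + t • v), v⟫ - ⟪gx, v⟫ - L * t * ‖v‖ ^ 2) t := by
    intro t
    have h1 := line_hasDerivAt hdiff x v t
    have h2 : HasDerivAt (fun t : ℝ => t * ⟪gx, v⟫) ⟪gx, v⟫ t := by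
      simpa using (hasDerivAt_id t).mul_const ⟪gx, v⟫
    have h3 : HasDerivAt (fun t : ℝ => L / 2 * t ^ 2 * ‖v‖ ^ 2) (L * t * ‖v‖ ^ 2) t := by
      have := ((hasDerivAt_pow 2 t).const_mul (L / 2)).mul_const (‖v‖ ^ 2)
      refine this.congr_deriv ?_
      ring
    exact (h1.sub h2).sub h3
  have hanti : AntitoneOn F (Icc (0:ℝ) 1) := by
    apply antitoneOn_of_deriv_nonpos (convex_Icc 0 1)
    · exact fun t _ => (hF' t).continuousAt.continuousWithinAt
    · exact fun t _ => ((hF' t).differentiableAt).differentiableWithinAt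
    · intro t ht
      rw [interior_Icc] at ht
      rw [(hF' t).deriv]
      have hb : ⟪gradient f (x + t • v) - gx, v⟫ ≤ L * t * ‖v‖ ^ 2 := by
        calc ⟪gradient f (x + t • v) - gx, v⟫ ≤ ‖gradient f (x + t • v) - gx‖ * ‖v‖ :=
              real_inner_le_norm _ _
          _ ≤ (L * ‖(x + t • v) - x‖) * ‖v‖ := by
              gcongr; exact hlip _ _
          _ = L * t * ‖v‖ ^ 2 := by
              rw [add_sub_cancel_left, norm_smul, Real.norm_eq_abs,
                abs_of_pos ht.1]; ring
      rw [inner_sub_left] at hb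
      linarith
  have h01 := hanti (left_mem_Icc.2 zero_le_one) (right_mem_Icc.2 zero_le_one) zero_le_one
  simp only [hF, one_smul, zero_smul, add_zero, one_pow, zero_pow, mul_one, one_mul,
    mul_zero, zero_mul, sub_zero] at h01
  have hxy : x + v = y := by rw [hv]; abel
  rw [hxy] at h01
  linarith

/-- First-order condition for convexity. -/
lemma first_order {f : E → ℝ} (hconv : ConvexOn ℝ Set.univ f)
    (hdiff : ∀ w, DifferentiableAt ℝ f w) (x y : E) :
    f x + ⟪gradient f x, y - x⟫ ≤ f y := by
  set v := y - x with hv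
  set φ : ℝ → ℝ := fun t => f (x + t • v) with hφ
  have hφconv : ConvexOn ℝ Set.univ φ := by
    have h := hconv.comp_affineMap (AffineMap.lineMap x y : ℝ →ᵃ[ℝ] E)
    simp only [preimage_univ] at h
    have heq : φ = f ∘ (AffineMap.lineMap x y : ℝ →ᵃ[ℝ] E) := by
      funext t
      have harg : x + t • v = AffineMap.lineMap x y t := by
        rw [hv, AffineMap.lineMap_apply]
        simp only [vsub_eq_sub, vadd_eq_add]
        module
      simp only [hφ, Function.comp_apply]
      rw [harg]
    rw [heq]
    exact h
  have hd := line_hasDerivAt hdiff x v 0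
  have hds : HasDerivAt φ ⟪gradient f x, v⟫ 0 := by simpa using hd
  have hslope := hφconv.le_slope_of_hasDerivAt (mem_univ 0) (mem_univ 1) zero_lt_one hds
  rw [slope_def_field] at hslope
  have hφ0 : φ 0 = f x := by simp [hφ]
  have hφ1 : φ 1 = f y := by simp [hφ, hv]
  rw [hφ0, hφ1] at hslope
  norm_num at hslope
  have hg : ⟪gradient f x, v⟫ = fderiv ℝ f x v := by simp [gradient]
  linarith [hslope]

/-- Co-coercivity of the gradient of a convex function with Lipschitz gradient. -/
lemma cocoercive {f : E → ℝ} {L : ℝ} (hL : 0 < L) (hconv : ConvexOn ℝ Set.univ f)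
    (hdiff : ∀ w, DifferentiableAt ℝ f w)
    (hlip : ∀ w v : E, ‖gradient f w - gradient f v‖ ≤ L * ‖w - v‖) (x y : E) :
    (1 / L) * ‖gradient f y - gradient f x‖ ^ 2 ≤ ⟪gradient f y - gradient f x, y - x⟫ := by
  have key : ∀ a b : E, f a + ⟪gradient f a, b - a⟫ +
      (1 / (2 * L)) * ‖gradient f b - gradient f a‖ ^ 2 ≤ f b := by
    intro a b
    set u := gradient f b - gradient f a with hu
    set z := b - (1 / L) • u with hz
    have h1 := first_order hconv hdiff a z
    have h2 := descent_lemma hL hdiff hlip b z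
    have e1 : z - b = -((1 / L) • u) := by rw [hz]; abel
    have e2 : ⟪gradient f b, z - b⟫ = -(1 / L) * ⟪gradient f b, u⟫ := by
      rw [e1, inner_neg_right, real_inner_smul_right]; ring
    have e3 : ‖z - b‖ ^ 2 = (1 / L) ^ 2 * ‖u‖ ^ 2 := by
      rw [e1, norm_neg, norm_smul, mul_pow, Real.norm_eq_abs, sq_abs]
    have e4 : ⟪gradient f a, z - a⟫ = ⟪gradient f a, b - a⟫ - (1 / L) * ⟪gradient f a, u⟫ := by
      have : z - a = (b - a) - (1 / L) • u := by rw [hz]; abel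
      rw [this, inner_sub_right, real_inner_smul_right]
    have e5 : ⟪gradient f b, u⟫ - ⟪gradient f a, u⟫ = ‖u‖ ^ 2 := by
      rw [← inner_sub_left, ← hu, real_inner_self_eq_norm_sq]
    rw [e2, e3] at h2
    rw [e4] at h1
    have hL' : L ≠ 0 := ne_of_gt hL
    have e5c : (1/L) * ⟪gradient f b, u⟫ - (1/L) * ⟪gradient f a, u⟫ = (1/L) * ‖u‖ ^ 2 := by
      rw [← mul_sub, e5]
    have h2' : L / 2 * ((1 / L) ^ 2 * ‖u‖ ^ 2) = (1/L) * ‖u‖ ^ 2 / 2 := by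
      field_simp
    have hg : (1:ℝ) / (2 * L) = (1/L) / 2 := by ring
    rw [hg]
    linarith [h1, h2, e5c, h2']
  have k1 := key x y
  have k2 := key y x
  have e6 : ⟪gradient f y, x - y⟫ = -⟪gradient f y, y - x⟫ := by
    rw [← inner_neg_right]; congr 1; abel
  have e7 : ‖gradient f x - gradient f y‖ = ‖gradient f y - gradient f x‖ := by
    rw [← norm_neg]; congr 1; abel
  rw [e6, e7] at k2
  rw [inner_sub_left]
  have hg : (1:ℝ) / (2 * L) = (1/L) / 2 := by ring
  rw [hg] at k1 k2
  linarith [k1, k2]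

end Aux

set_option maxHeartbeats 1000000 in
/-- If `f : ℝ^d` is convex and differentiable with `L`-Lipschitz gradient (`L > 0`),
then `w ↦ w − ∇f(w)` is Lipschitz with constant `max (L − 1) 1`. -/
theorem id_sub_gradient_lipschitz (d : ℕ) (f : EuclideanSpace ℝ (Fin d) → ℝ) (L : ℝ)
    (hL : 0 < L) (hconv : ConvexOn ℝ Set.univ f)
    (hdiff : ∀ w, DifferentiableAt ℝ f w)
    (hlip : ∀ w v : EuclideanSpace ℝ (Fin d),
      ‖gradient f w - gradient f v‖ ≤ L * ‖w - v‖) :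
    ∀ w w' : EuclideanSpace ℝ (Fin d),
      ‖(w - gradient f w) - (w' - gradient f w')‖ ≤ max (L - 1) 1 * ‖w - w'‖ := by
  intro w w'
  set x := w - w' with hx
  set u := gradient f w - gradient f w' with hu
  have hcoco := cocoercive hL hconv hdiff hlip w' w
  have hxu : (w - gradient f w) - (w' - gradient f w') = x - u := by
    rw [hx, hu]; abel
  rw [hxu]
  have hub : ‖u‖ ≤ L * ‖x‖ := hlip w w'
  have hM : (1:ℝ) ≤ max (L - 1) 1 := le_max_right _ _
  have hM0 : (0:ℝ) ≤ max (L - 1) 1 := by linarith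
  have hsq : ‖x - u‖ ^ 2 ≤ (max (L - 1) 1 * ‖x‖) ^ 2 := by
    rw [norm_sub_sq_real]
    have hic : (1 / L) * ‖u‖ ^ 2 ≤ ⟪u, x⟫ := hcoco
    have h3 : ‖u‖ ^ 2 ≤ ⟪u, x⟫ * L := by
      rwa [one_div, inv_mul_eq_div, div_le_iff₀ hL] at hic
    have hpos : 0 ≤ ⟪u, x⟫ := by nlinarith [h3, sq_nonneg ‖u‖, hL]
    have hx2 : ⟪x, u⟫ = ⟪u, x⟫ := real_inner_comm u x
    rw [hx2]
    rcases le_total L 2 with h2 | h2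
    · have hmax : max (L - 1) 1 = 1 := max_eq_right (by linarith)
      rw [hmax]
      have hp : L * ⟪u, x⟫ ≤ 2 * ⟪u, x⟫ := by nlinarith [hpos, h2]
      nlinarith [h3, hp]
    · have hmax : max (L - 1) 1 = L - 1 := max_eq_left (by linarith)
      rw [hmax]
      have hu2 : ‖u‖ ^ 2 ≤ (L * ‖x‖) ^ 2 := pow_le_pow_left₀ (norm_nonneg u) hub 2
      have p1 : (L - 2) * ‖u‖ ^ 2 ≤ (L - 2) * ((L * ‖x‖) ^ 2) :=
        mul_le_mul_of_nonneg_left hu2 (by linarith)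
      have hkey : L * (‖u‖ ^ 2 - 2 * ⟪u, x⟫) ≤ (L - 2) * (L ^ 2 * ‖x‖ ^ 2) := by
        nlinarith [h3, p1]
      nlinarith [hkey, hL]
  have h0 : (0:ℝ) ≤ max (L - 1) 1 * ‖x‖ := mul_nonneg hM0 (norm_nonneg x)
  nlinarith [norm_nonneg (x - u), hsq, h0]
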